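/- If x, y are integers with x² − d·y² = 1 (d positive square-free), then w = x² − (xy√(−d))·i − (y²d)·j + (xy√(−d))·k has reduced norm 1 in the quaternion algebra (−1,−1/ℚ(√(−d))), i.e. w·w̄ = 1; hence w is a unit of the ℤ-order (−1,−1/𝔬_K). -/

import Mathlib

open Quaternion Complex

/-- The unit `w = x² - (xy√(-d))·i - (y²d)·j + (xy√(-d))·k` has reduced norm 1
whenever `x² - d y² = 1`, hence is a unit of the ℤ-order `(-1,-1/𝔬_K)`. -/
theorem pell_square_unit_norm_one (d : ℕ) (hd : 0 < d) (hsf : Squarefree d)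
    (x y : ℤ) (hpell : x ^ 2 - (d : ℤ) * y ^ 2 = 1) :
    let s : ℂ := Complex.I * Real.sqrt d
    let w : ℍ[ℂ] := ⟨((x : ℂ)) ^ 2, -((x : ℂ) * (y : ℂ) * s), -((y : ℂ) ^ 2 * (d : ℂ)),
      (x : ℂ) * (y : ℂ) * s⟩
    w * star w = 1 ∧ IsUnit w := by
  intro s w
  have hId : (I : ℂ) ^ 2 * ((Real.sqrt d : ℝ) : ℂ) ^ 2 = -(d : ℂ) := by
    rw [Complex.I_sq, ← Complex.ofReal_pow, Real.sq_sqrt (Nat.cast_nonneg d)]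
    push_cast; ring
  have hp : ((x : ℂ) ^ 2 - (d : ℂ) * (y : ℂ) ^ 2) = 1 := by
    exact_mod_cast congrArg (Int.cast : ℤ → ℂ) hpell
  have h1 : w * star w = 1 := by
    ext <;> simp only [Quaternion.re_mul, Quaternion.imI_mul, Quaternion.imJ_mul, Quaternion.imK_mul, Quaternion.re_star, Quaternion.imI_star, Quaternion.imJ_star, Quaternion.imK_star] <;> simp [w, s] <;> ring_nf <;>
      linear_combination 2 * (x:ℂ)^2 * (y:ℂ)^2 * hId + ((x:ℂ)^2 - (d:ℂ)*(y:ℂ)^2 + 1) * hp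
  have h2 : star w * w = 1 := by
    ext <;> simp only [Quaternion.re_mul, Quaternion.imI_mul, Quaternion.imJ_mul, Quaternion.imK_mul, Quaternion.re_star, Quaternion.imI_star, Quaternion.imJ_star, Quaternion.imK_star] <;> simp [w, s] <;> ring_nf <;>
      linear_combination 2 * (x:ℂ)^2 * (y:ℂ)^2 * hId + ((x:ℂ)^2 - (d:ℂ)*(y:ℂ)^2 + 1) * hp
  exact ⟨h1, ⟨⟨w, star w, h1, h2⟩, rfl⟩⟩
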